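/- arXiv:1911.01748 — 5 statements merged into one kernel-verified Lean document; each statement's English description precedes it below -/
import Mathlib

section
/- Let μ be a probability measure on a measurable space E, L a closed densely defined operator on L²(μ) with domain D(L), and suppose there exist ρ > 0 and a bounded symmetric operator S on L²(μ) with ‖Sf‖₂ ≤ (1/2)‖f − μf‖₂ and ⟨f, Lf + S(Lf)⟩ ≤ −ρ‖f − μf‖₂² for all f ∈ D(L). Let (P_t)_{t≥0} be a family of bounded linear operators on L²(μ) with P₀ = Id, P_{t+s} = P_t ∘ P_s, μ(P_t f) = μ(f) for all f ∈ L²(μ), and such that for every f ∈ D(L) one has P_t f ∈ D(L) and t ↦ P_t f is differentiable in L²(μ) with derivative L(P_t f). Then for every f ∈ L²(μ) and t ≥ 0: ‖P_t f − μf‖₂ ≤ √3 · e^{−2ρt/3} · ‖f − μf‖₂. -/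
open MeasureTheory
open scoped RealInnerProductSpace ENNReal

section Helpers

variable {E : Type*} [MeasurableSpace E] (μ : Measure E) [IsProbabilityMeasure μ]

lemma int_eq_inner' (h : Lp ℝ 2 μ) : ∫ x, h x ∂μ = ⟪Lp.const 2 μ (1:ℝ), h⟫ := by
  rw [L2.inner_def]
  refine (integral_congr_ae ?_).symm
  filter_upwards [Lp.coeFn_const 2 μ (1:ℝ)] with x hx
  simp [hx, RCLike.inner_apply]

lemma int_const' (c : ℝ) : ∫ x, (Lp.const 2 μ c) x ∂μ = c := by
  rw [integral_congr_ae (Lp.coeFn_const 2 μ c)]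
  simp

lemma const_eq_smul' (c : ℝ) : Lp.const 2 μ c = c • Lp.const 2 μ (1:ℝ) := by
  have := (Lp.constₗ 2 μ ℝ).map_smul c (1:ℝ)
  rw [smul_eq_mul, mul_one] at this
  exact this

lemma inner_const_left' (c : ℝ) (h : Lp ℝ 2 μ) :
    ⟪Lp.const 2 μ c, h⟫ = c * ∫ x, h x ∂μ := by
  rw [const_eq_smul', int_eq_inner', real_inner_smul_left]

lemma cont_int' : Continuous fun h : Lp ℝ 2 μ => ∫ x, h x ∂μ := by
  have : (fun h : Lp ℝ 2 μ => ∫ x, h x ∂μ)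
      = fun h => ⟪Lp.const 2 μ (1:ℝ), h⟫ := funext (int_eq_inner' μ)
  rw [this]
  exact continuous_const.inner continuous_id

lemma cont_constInt' : Continuous fun h : Lp ℝ 2 μ => Lp.const 2 μ (∫ x, h x ∂μ) := by
  have : (fun h : Lp ℝ 2 μ => Lp.const 2 μ (∫ x, h x ∂μ))
      = fun h => Lp.constL 2 μ ℝ (∫ x, h x ∂μ) := by
    funext h; simp [Lp.constL_apply]
  rw [this]
  exact (Lp.constL 2 μ ℝ).continuous.comp (cont_int' μ)

end Helpers

/-- Under hypothesis (H), if `(P_t)_{t≥0}` is the Markov semigroup on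
`L²(μ)` generated by `L` (with `P₀ = Id`, the semigroup property, invariance of `μ`, and
`∂_t P_t f = L P_t f` for `f ∈ D(L)`), then for every `f ∈ L²(μ)` and `t ≥ 0`,
`‖P_t f − μf‖₂ ≤ √3 e^{−2ρt/3} ‖f − μf‖₂`. -/
theorem hypocoercive_L2_decay
    {E : Type*} [MeasurableSpace E] (μ : Measure E) [IsProbabilityMeasure μ]
    (L : Lp ℝ 2 μ →ₗ.[ℝ] Lp ℝ 2 μ)
    (hdense : Dense (L.domain : Set (Lp ℝ 2 μ)))
    (hclosed : IsClosed {p : Lp ℝ 2 μ × Lp ℝ 2 μ | ∃ hp : p.1 ∈ L.domain, L ⟨p.1, hp⟩ = p.2})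
    (ρ : ℝ) (hρ : 0 < ρ)
    (S : Lp ℝ 2 μ →L[ℝ] Lp ℝ 2 μ)
    (hSsym : ∀ f g : Lp ℝ 2 μ, ⟪S f, g⟫ = ⟪f, S g⟫)
    (hS1 : ∀ f : L.domain,
      ‖S f‖ ≤ (1 / 2) * ‖(f : Lp ℝ 2 μ) - Lp.const 2 μ (∫ x, (f : Lp ℝ 2 μ) x ∂μ)‖)
    (hS2 : ∀ f : L.domain,
      ⟪(f : Lp ℝ 2 μ), L f + S (L f)⟫
        ≤ -ρ * ‖(f : Lp ℝ 2 μ) - Lp.const 2 μ (∫ x, (f : Lp ℝ 2 μ) x ∂μ)‖ ^ 2)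
    (P : ℝ → Lp ℝ 2 μ →L[ℝ] Lp ℝ 2 μ)
    (hP0 : P 0 = ContinuousLinearMap.id ℝ (Lp ℝ 2 μ))
    (hPsemigroup : ∀ s t : ℝ, 0 ≤ s → 0 ≤ t → P (t + s) = (P t).comp (P s))
    (hPinv : ∀ t : ℝ, 0 ≤ t → ∀ f : Lp ℝ 2 μ, ∫ x, (P t f) x ∂μ = ∫ x, f x ∂μ)
    (hPgen : ∀ f : L.domain, ∀ t : ℝ, 0 ≤ t → ∃ hm : P t (f : Lp ℝ 2 μ) ∈ L.domain,
      HasDerivWithinAt (fun s : ℝ => P s (f : Lp ℝ 2 μ))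
        (L ⟨P t (f : Lp ℝ 2 μ), hm⟩) (Set.Ici 0) t)
    (f : Lp ℝ 2 μ) (t : ℝ) (ht : 0 ≤ t) :
    ‖P t f - Lp.const 2 μ (∫ x, f x ∂μ)‖
      ≤ Real.sqrt 3 * Real.exp (-(2 * ρ * t / 3)) * ‖f - Lp.const 2 μ (∫ x, f x ∂μ)‖ := by
  classical
  -- extend `hS1` to all of `L²` by density
  have hS1' : ∀ h : Lp ℝ 2 μ, ‖S h‖ ≤ (1/2) * ‖h - Lp.const 2 μ (∫ x, h x ∂μ)‖ := by
    have hC : IsClosed {h : Lp ℝ 2 μ |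
        ‖S h‖ ≤ (1/2) * ‖h - Lp.const 2 μ (∫ x, h x ∂μ)‖} :=
      isClosed_le S.continuous.norm
        (continuous_const.mul ((continuous_id.sub (cont_constInt' μ)).norm))
    intro h
    have hsub : (L.domain : Set (Lp ℝ 2 μ)) ⊆
        {h : Lp ℝ 2 μ | ‖S h‖ ≤ (1/2) * ‖h - Lp.const 2 μ (∫ x, h x ∂μ)‖} :=
      fun g hg => hS1 ⟨g, hg⟩
    have := hC.closure_subset_iff.mpr hsub
    exact this (by rw [hdense.closure_eq]; trivial)
  -- S kills constants
  have hSconst : ∀ c : ℝ, S (Lp.const 2 μ c) = 0 := by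
    intro c
    have h := hS1' (Lp.const 2 μ c)
    rw [int_const'] at h
    simp only [sub_self, norm_zero, mul_zero] at h
    exact norm_le_zero_iff.mp h
  -- main estimate on the domain
  suffices key : ∀ g ∈ L.domain, ‖P t g - Lp.const 2 μ (∫ x, g x ∂μ)‖
      ≤ Real.sqrt 3 * Real.exp (-(2 * ρ * t / 3)) * ‖g - Lp.const 2 μ (∫ x, g x ∂μ)‖ by
    have hC : IsClosed {g : Lp ℝ 2 μ | ‖P t g - Lp.const 2 μ (∫ x, g x ∂μ)‖
        ≤ Real.sqrt 3 * Real.exp (-(2 * ρ * t / 3)) * ‖g - Lp.const 2 μ (∫ x, g x ∂μ)‖} :=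
      isClosed_le (((P t).continuous.sub (cont_constInt' μ)).norm)
        (continuous_const.mul ((continuous_id.sub (cont_constInt' μ)).norm))
    have hsub : (L.domain : Set (Lp ℝ 2 μ)) ⊆
        {g : Lp ℝ 2 μ | ‖P t g - Lp.const 2 μ (∫ x, g x ∂μ)‖
        ≤ Real.sqrt 3 * Real.exp (-(2 * ρ * t / 3)) * ‖g - Lp.const 2 μ (∫ x, g x ∂μ)‖} :=
      fun g hg => key g hg
    have := hC.closure_subset_iff.mpr hsub
    exact this (by rw [hdense.closure_eq]; trivial)
  intro g hg
  set c : ℝ := ∫ x, g x ∂μ with hc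
  set k : Lp ℝ 2 μ := Lp.const 2 μ c with hk
  set u : ℝ → Lp ℝ 2 μ := fun s => P s g with hu
  have hus : ∀ s : ℝ, u s = P s g := fun s => by rw [hu]
  clear_value c k u
  have hmean : ∀ s, 0 ≤ s → ∫ x, (u s) x ∂μ = c := by
    intro s hs; rw [hus, hc]; exact hPinv s hs g
  -- the centered square norm
  have hα : ∀ s, 0 ≤ s → ‖u s - k‖^2 = ⟪u s, u s⟫ - c^2 := by
    intro s hs
    have h1 : ⟪k, u s⟫ = c * c := by rw [hk, inner_const_left', hmean s hs]
    have h1' : ⟪u s, k⟫ = c * c := (real_inner_comm _ _).trans h1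
    have h2 : ⟪k, k⟫ = c * c := by rw [hk, inner_const_left', int_const']
    have h3 : ‖u s - k‖^2 = ⟪u s - k, u s - k⟫ := (real_inner_self_eq_norm_sq _).symm
    rw [h3, inner_sub_left, inner_sub_right, inner_sub_right, h1, h1', h2]
    ring
  -- the perturbation term is small
  have hβ : ∀ s, 0 ≤ s → |⟪u s, S (u s)⟫| ≤ (1/2) * ‖u s - k‖^2 := by
    intro s hs
    have hSu : S (u s) = S (u s - k) := by
      rw [map_sub, hk, hSconst c, sub_zero]
    have hko : ⟪k, S (u s - k)⟫ = 0 := by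
      rw [← hSsym, hk, hSconst c, inner_zero_left]
    have hsplit : ⟪u s, S (u s)⟫ = ⟪u s - k, S (u s - k)⟫ := by
      rw [hSu, inner_sub_left, hko, sub_zero]
    have hintw : ∫ x, (u s - k) x ∂μ = 0 := by
      rw [int_eq_inner', inner_sub_right, ← int_eq_inner', ← int_eq_inner',
        hmean s hs, hk, int_const', sub_self]
    have hnorm : ‖S (u s - k)‖ ≤ (1/2) * ‖u s - k‖ := by
      have h := hS1' (u s - k)
      rw [hintw] at h
      simpa using h
    calc |⟪u s, S (u s)⟫| = |⟪u s - k, S (u s - k)⟫| := by rw [hsplit]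
      _ ≤ ‖u s - k‖ * ‖S (u s - k)‖ := abs_real_inner_le_norm _ _
      _ ≤ ‖u s - k‖ * ((1/2) * ‖u s - k‖) :=
          mul_le_mul_of_nonneg_left hnorm (norm_nonneg _)
      _ = (1/2) * ‖u s - k‖^2 := by ring
  set K : ℝ := 4 * ρ / 3 with hK
  set H : ℝ → ℝ := fun s => ⟪u s, u s⟫ - c^2 + ⟪u s, S (u s)⟫ with hH
  have hHs : ∀ s : ℝ, H s = (⟪u s, u s⟫ - c^2) + ⟪u s, S (u s)⟫ := fun s => by rw [hH]
  clear_value K H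
  have hHα : ∀ s, 0 ≤ s → H s ≤ (3/2) * ‖u s - k‖^2 ∧ ‖u s - k‖^2 ≤ 2 * H s := by
    intro s hs
    have h1 := hα s hs
    have h2 := abs_le.mp (hβ s hs)
    have h3 := hHs s
    constructor
    · linarith [h2.2]
    · linarith [h2.1]
  -- derivative of H
  have hHderiv : ∀ s, 0 ≤ s → ∃ d : ℝ,
      HasDerivWithinAt H d (Set.Ici 0) s ∧ d ≤ -K * H s := by
    intro s hs
    obtain ⟨hm, hd⟩ := hPgen ⟨g, hg⟩ s hs
    set d : Lp ℝ 2 μ := L ⟨P s g, hm⟩ with hdd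
    clear_value d
    have hdu : HasDerivWithinAt u d (Set.Ici 0) s := by rw [hu]; exact hd
    have hdS : HasDerivWithinAt (fun r => S (u r)) (S d) (Set.Ici 0) s :=
      (S.hasFDerivAt).comp_hasDerivWithinAt s hdu
    have h1 : HasDerivWithinAt (fun r => ⟪u r, u r⟫ - c^2)
        (⟪u s, d⟫ + ⟪d, u s⟫) (Set.Ici 0) s := (hdu.inner ℝ hdu).sub_const _
    have h2 : HasDerivWithinAt (fun r => ⟪u r, S (u r)⟫)
        (⟪u s, S d⟫ + ⟪d, S (u s)⟫) (Set.Ici 0) s := hdu.inner ℝ hdS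
    have hDH : HasDerivWithinAt H
        ((⟪u s, d⟫ + ⟪d, u s⟫) + (⟪u s, S d⟫ + ⟪d, S (u s)⟫)) (Set.Ici 0) s := by
      rw [hH]; exact h1.add h2
    refine ⟨_, hDH, ?_⟩
    have e1 : ⟪d, u s⟫ = ⟪u s, d⟫ := real_inner_comm _ _
    have e2 : ⟪d, S (u s)⟫ = ⟪u s, S d⟫ :=
      (hSsym d (u s)).symm.trans (real_inner_comm _ _)
    have hmean' : ∫ x, (P s g) x ∂μ = c := by rw [← hus]; exact hmean s hs
    have hS2' : ⟪P s g, (L ⟨P s g, hm⟩ : Lp ℝ 2 μ) + S (L ⟨P s g, hm⟩)⟫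
        ≤ -ρ * ‖P s g - Lp.const 2 μ (∫ x, (P s g) x ∂μ)‖ ^ 2 := hS2 ⟨P s g, hm⟩
    rw [hmean', ← hdd, ← hk, inner_add_right, ← hus s] at hS2'
    have hS2'' : ⟪u s, d⟫ + ⟪u s, S d⟫ ≤ -ρ * ‖u s - k‖^2 := hS2'
    have hcmp := (hHα s hs).1
    have h5 : K * H s ≤ 2 * ρ * ‖u s - k‖^2 := by
      have h6 : K * H s ≤ K * ((3/2) * ‖u s - k‖^2) :=
        mul_le_mul_of_nonneg_left hcmp (by rw [hK]; linarith)
      have h7 : K * ((3/2) * ‖u s - k‖^2) = 2 * ρ * ‖u s - k‖^2 := by rw [hK]; ring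
      linarith
    rw [e1, e2]
    linarith
  have hHcont : ContinuousOn H (Set.Ici 0) := fun s hs =>
    ((hHderiv s hs).choose_spec.1).continuousWithinAt
  -- G = e^{Ks} * H s is antitone on [0, ∞)
  set G : ℝ → ℝ := fun s => Real.exp (K * s) * H s with hG
  clear_value G
  have hGderiv : ∀ x : ℝ, ∀ hx : 0 < x, HasDerivAt G
      (Real.exp (K * x) * (K * 1) * H x +
        Real.exp (K * x) * (hHderiv x hx.le).choose) x := by
    intro x hx
    have hHx : HasDerivAt H (hHderiv x hx.le).choose x :=
      ((hHderiv x hx.le).choose_spec.1).hasDerivAt (Ici_mem_nhds hx)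
    have he : HasDerivAt (fun s : ℝ => Real.exp (K * s))
        (Real.exp (K * x) * (K * 1)) x := ((hasDerivAt_id x).const_mul K).exp
    rw [hG]
    exact he.mul hHx
  have hGanti : AntitoneOn G (Set.Ici 0) := by
    have hGcont : ContinuousOn G (Set.Ici 0) := by
      rw [hG]
      exact ((Real.continuous_exp.comp
        (continuous_const.mul continuous_id)).continuousOn).mul hHcont
    refine antitoneOn_of_deriv_nonpos (convex_Ici 0) hGcont ?_ ?_
    · intro x hx
      rw [interior_Ici] at hx
      exact (hGderiv x hx).differentiableAt.differentiableWithinAt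
    · intro x hx
      rw [interior_Ici] at hx
      rw [(hGderiv x hx).deriv]
      have hle := (hHderiv x hx.le).choose_spec.2
      have hexp := (Real.exp_pos (K * x)).le
      linarith [mul_le_mul_of_nonneg_left hle hexp]
  have hGle : Real.exp (K * t) * H t ≤ H 0 := by
    have h0 : G 0 = H 0 := by rw [hG]; simp
    have h1 : G t ≤ G 0 := hGanti Set.self_mem_Ici ht ht
    rw [h0, hG] at h1
    exact h1
  have hHt : H t ≤ Real.exp (-(K * t)) * H 0 :=
    calc H t = Real.exp (-(K * t)) * (Real.exp (K * t) * H t) := by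
          rw [← mul_assoc, ← Real.exp_add]; simp
      _ ≤ Real.exp (-(K * t)) * H 0 :=
          mul_le_mul_of_nonneg_left hGle (Real.exp_pos _).le
  have hu0 : u 0 = g := by rw [hus, hP0]; rfl
  -- conclude
  have hfinal : ‖u t - k‖^2 ≤ 3 * Real.exp (-(K * t)) * ‖g - k‖^2 := by
    have h1 := (hHα t ht).2
    have h2 : H 0 ≤ (3/2) * ‖g - k‖^2 := by
      have h3 := (hHα 0 le_rfl).1
      rwa [hu0] at h3
    have hexp := (Real.exp_pos (-(K * t))).le
    linarith [h1, hHt, mul_le_mul_of_nonneg_left h2 hexp]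
  have hexp2 : Real.exp (-(2 * ρ * t / 3))^2 = Real.exp (-(K * t)) := by
    rw [← Real.exp_nat_mul]
    congr 1
    rw [hK]; push_cast; ring
  have hrhs : (Real.sqrt 3 * Real.exp (-(2 * ρ * t / 3)) * ‖g - k‖)^2
      = 3 * Real.exp (-(K * t)) * ‖g - k‖^2 := by
    rw [mul_pow, mul_pow, hexp2, Real.sq_sqrt (by norm_num : (0:ℝ) ≤ 3)]
  have hgoal : ‖u t - k‖ ≤ Real.sqrt 3 * Real.exp (-(2 * ρ * t / 3)) * ‖g - k‖ := by
    have h1 : ‖u t - k‖ = Real.sqrt (‖u t - k‖^2) := (Real.sqrt_sq (norm_nonneg _)).symm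
    have h2 : Real.sqrt ((Real.sqrt 3 * Real.exp (-(2 * ρ * t / 3)) * ‖g - k‖)^2)
        = Real.sqrt 3 * Real.exp (-(2 * ρ * t / 3)) * ‖g - k‖ :=
      Real.sqrt_sq (by positivity)
    rw [h1, ← h2]
    exact Real.sqrt_le_sqrt (by rw [hrhs]; exact hfinal)
  rw [← hus t]
  exact hgoal
end

section
/- Let μ be a probability measure, L a densely defined operator on L²(μ) with domain D(L), V ∈ L^∞(μ), and S a bounded symmetric operator on L²(μ) with ‖Sf‖₂ ≤ (1/2)‖f‖₂ for all f. Set B = Id + S, ⟨f,g⟩_B = ⟨f, Bg⟩, ‖f‖_B = √⟨f,f⟩_B, and Λ(V) = sup{ ⟨f, (L+V)f⟩_B : f ∈ D(L), ‖f‖_B = 1 }, assumed finite. Let (Q_t)_{t≥0} be a family of bounded operators on L²(μ) with Q₀ = Id, Q_{t+s} = Q_t ∘ Q_s, and such that for every f ∈ D(L), Q_t f ∈ D(L) and t ↦ Q_t f is differentiable in L²(μ) with derivative (L+V)(Q_t f). Then for every f ∈ L²(μ) and t ≥ 0: ‖Q_t f‖_B ≤ e^{t Λ(V)} ‖f‖_B.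 -/
open MeasureTheory
open scoped RealInnerProductSpace ENNReal

set_option maxHeartbeats 1000000 in
/-- If `S` is bounded symmetric with `‖Sf‖₂ ≤ ½‖f‖₂`, `B = Id + S`,
`V ∈ L^∞(μ)` acts by multiplication (operator `M`), `Λ(V) = sup{⟨f,(L+V)f⟩_B : f ∈ D(L),
‖f‖_B = 1}` is finite, and `(Q_t)` is the semigroup generated by `L + V`, then
`‖Q_t f‖_B ≤ e^{tΛ(V)} ‖f‖_B` for all `f ∈ L²(μ)` and `t ≥ 0`. -/
theorem feynman_kac_modified_norm_growth
    {E : Type*} [MeasurableSpace E] (μ : Measure E) [IsProbabilityMeasure μ]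
    (L : Lp ℝ 2 μ →ₗ.[ℝ] Lp ℝ 2 μ)
    (hdense : Dense (L.domain : Set (Lp ℝ 2 μ)))
    (V : E → ℝ) (hV : MemLp V ⊤ μ)
    (M : Lp ℝ 2 μ →L[ℝ] Lp ℝ 2 μ)
    (hM : ∀ f : Lp ℝ 2 μ, M f =ᵐ[μ] fun x => V x * f x)
    (S : Lp ℝ 2 μ →L[ℝ] Lp ℝ 2 μ)
    (hSsym : ∀ f g : Lp ℝ 2 μ, ⟪S f, g⟫ = ⟪f, S g⟫)
    (hSbound : ∀ f : Lp ℝ 2 μ, ‖S f‖ ≤ (1 / 2) * ‖f‖)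
    (Λ : ℝ)
    (hΛ : IsLUB {a : ℝ | ∃ f : L.domain,
      Real.sqrt ⟪(f : Lp ℝ 2 μ), (f : Lp ℝ 2 μ) + S (f : Lp ℝ 2 μ)⟫ = 1 ∧
      a = ⟪(f : Lp ℝ 2 μ), (L f + M (f : Lp ℝ 2 μ)) + S (L f + M (f : Lp ℝ 2 μ))⟫} Λ)
    (Q : ℝ → Lp ℝ 2 μ →L[ℝ] Lp ℝ 2 μ)
    (hQ0 : Q 0 = ContinuousLinearMap.id ℝ (Lp ℝ 2 μ))
    (hQsemigroup : ∀ s t : ℝ, 0 ≤ s → 0 ≤ t → Q (t + s) = (Q t).comp (Q s))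
    (hQgen : ∀ f : L.domain, ∀ t : ℝ, 0 ≤ t → ∃ hm : Q t (f : Lp ℝ 2 μ) ∈ L.domain,
      HasDerivWithinAt (fun s : ℝ => Q s (f : Lp ℝ 2 μ))
        (L ⟨Q t (f : Lp ℝ 2 μ), hm⟩ + M (Q t (f : Lp ℝ 2 μ))) (Set.Ici 0) t)
    (f : Lp ℝ 2 μ) (t : ℝ) (ht : 0 ≤ t) :
    Real.sqrt ⟪Q t f, Q t f + S (Q t f)⟫
      ≤ Real.exp (t * Λ) * Real.sqrt ⟪f, f + S f⟫ := by
  -- lower bound on the modified norm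
  have hNlow : ∀ g : Lp ℝ 2 μ, ‖g‖ ^ 2 / 2 ≤ ⟪g, g + S g⟫ := by
    intro g
    rw [inner_add_right, real_inner_self_eq_norm_sq]
    have h1 := abs_real_inner_le_norm g (S g)
    have h2 := hSbound g
    have h3 : (0:ℝ) ≤ ‖g‖ := norm_nonneg g
    have := abs_le.mp h1
    nlinarith [this.1]
  have hNnn : ∀ g : Lp ℝ 2 μ, 0 ≤ ⟪g, g + S g⟫ := fun g =>
    le_trans (by positivity) (hNlow g)
  -- key pointwise bound from the definition of Λ
  have key : ∀ h : L.domain,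
      ⟪(h : Lp ℝ 2 μ), (L h + M (h : Lp ℝ 2 μ)) + S (L h + M (h : Lp ℝ 2 μ))⟫
        ≤ Λ * ⟪(h : Lp ℝ 2 μ), (h : Lp ℝ 2 μ) + S (h : Lp ℝ 2 μ)⟫ := by
    intro h
    rcases (hNnn (h : Lp ℝ 2 μ)).lt_or_eq with hpos | hzero
    · -- positive case: scale
      set X : ℝ := ⟪(h : Lp ℝ 2 μ), (L h + M (h : Lp ℝ 2 μ)) + S (L h + M (h : Lp ℝ 2 μ))⟫ with hX
      set Nh : ℝ := ⟪(h : Lp ℝ 2 μ), (h : Lp ℝ 2 μ) + S (h : Lp ℝ 2 μ)⟫ with hNh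
      set c : ℝ := (Real.sqrt Nh)⁻¹ with hc
      have hsq : Real.sqrt Nh > 0 := Real.sqrt_pos.mpr hpos
      have hcpos : 0 < c := inv_pos.mpr hsq
      have hc2 : c ^ 2 * Nh = 1 := by
        rw [hc, inv_pow, Real.sq_sqrt hpos.le]
        exact inv_mul_cancel₀ hpos.ne'
      -- the scaled element
      set h' : L.domain := c • h with hh'
      have hcoe : (h' : Lp ℝ 2 μ) = c • (h : Lp ℝ 2 μ) := rfl
      have hNh' : ⟪(h' : Lp ℝ 2 μ), (h' : Lp ℝ 2 μ) + S (h' : Lp ℝ 2 μ)⟫ = c ^ 2 * Nh := by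
        rw [hcoe, S.map_smul, ← smul_add, real_inner_smul_left, real_inner_smul_right, hNh]
        ring
      have hmem : ⟪(h' : Lp ℝ 2 μ), (L h' + M (h' : Lp ℝ 2 μ)) + S (L h' + M (h' : Lp ℝ 2 μ))⟫ ∈
          {a : ℝ | ∃ f : L.domain,
            Real.sqrt ⟪(f : Lp ℝ 2 μ), (f : Lp ℝ 2 μ) + S (f : Lp ℝ 2 μ)⟫ = 1 ∧
            a = ⟪(f : Lp ℝ 2 μ), (L f + M (f : Lp ℝ 2 μ)) + S (L f + M (f : Lp ℝ 2 μ))⟫} := by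
        exact ⟨h', by rw [hNh', hc2, Real.sqrt_one], rfl⟩
      have hle := hΛ.1 hmem
      have hLs : L h' = c • L h := L.map_smul c h
      have hexp : ⟪(h' : Lp ℝ 2 μ), (L h' + M (h' : Lp ℝ 2 μ)) + S (L h' + M (h' : Lp ℝ 2 μ))⟫
          = c ^ 2 * ⟪(h : Lp ℝ 2 μ), (L h + M (h : Lp ℝ 2 μ)) + S (L h + M (h : Lp ℝ 2 μ))⟫ := by
        rw [hcoe, hLs, M.map_smul, ← smul_add, S.map_smul, ← smul_add,
          real_inner_smul_left, real_inner_smul_right]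
        ring
      rw [hexp, ← hX] at hle
      have hc2pos : 0 < c ^ 2 := by positivity
      have hmul := mul_le_mul_of_nonneg_right hle hpos.le
      have hx : X = (c ^ 2 * X) * Nh := by
        rw [mul_comm (c ^ 2) X, mul_assoc, hc2, mul_one]
      linarith
    · -- zero case: h = 0
      have hg0 : (h : Lp ℝ 2 μ) = 0 := by
        have := hNlow (h : Lp ℝ 2 μ)
        rw [← hzero] at this
        have : ‖(h : Lp ℝ 2 μ)‖ = 0 := by nlinarith [norm_nonneg (h : Lp ℝ 2 μ), sq_nonneg ‖(h : Lp ℝ 2 μ)‖]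
        exact norm_eq_zero.mp this
      rw [hg0]
      simp
  -- main inequality on the domain via a Gronwall-type argument
  have main : ∀ g : L.domain,
      Real.sqrt ⟪Q t (g : Lp ℝ 2 μ), Q t (g : Lp ℝ 2 μ) + S (Q t (g : Lp ℝ 2 μ))⟫
        ≤ Real.exp (t * Λ) * Real.sqrt ⟪(g : Lp ℝ 2 μ), (g : Lp ℝ 2 μ) + S (g : Lp ℝ 2 μ)⟫ := by
    intro g
    set u : ℝ → Lp ℝ 2 μ := fun s => Q s (g : Lp ℝ 2 μ) with hu
    set φ : ℝ → ℝ := fun s => ⟪u s, u s + S (u s)⟫ with hφ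
    have hφderiv : ∀ s ∈ Set.Ici (0:ℝ), ∃ d : ℝ,
        HasDerivWithinAt φ d (Set.Ici 0) s ∧ d ≤ 2 * Λ * φ s := by
      intro s hs
      obtain ⟨hm, hder⟩ := hQgen g s hs
      set D : Lp ℝ 2 μ := L ⟨u s, hm⟩ + M (u s) with hD
      have hSu : HasDerivWithinAt (fun s => S (u s)) (S D) (Set.Ici 0) s :=
        (S.hasFDerivAt).comp_hasDerivWithinAt s hder
      have hw : HasDerivWithinAt (fun s => u s + S (u s)) (D + S D) (Set.Ici 0) s :=
        hder.add hSu
      have hinner : HasDerivWithinAt φ (⟪u s, D + S D⟫ + ⟪D, u s + S (u s)⟫) (Set.Ici 0) s :=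
        HasDerivWithinAt.inner ℝ hder hw
      refine ⟨_, hinner, ?_⟩
      have hsym : ⟪D, u s + S (u s)⟫ = ⟪u s, D + S D⟫ := by
        rw [inner_add_right, inner_add_right, ← hSsym D (u s), real_inner_comm D (u s),
          real_inner_comm (S D) (u s)]
      rw [hsym]
      have := key ⟨u s, hm⟩
      simp only [hD]
      have hφs : φ s = ⟪u s, u s + S (u s)⟫ := rfl
      rw [hφs]
      nlinarith [key ⟨u s, hm⟩]
    -- ψ = φ * exp(-(2Λ)s) is antitone on Ici 0
    set ψ : ℝ → ℝ := fun s => φ s * Real.exp (-(2 * Λ) * s) with hψ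
    have hψderiv : ∀ s ∈ Set.Ioi (0:ℝ), ∃ d ≤ 0, HasDerivAt ψ d s := by
      intro s hs
      obtain ⟨d, hd, hdle⟩ := hφderiv s (Set.mem_Ici.mpr (le_of_lt (Set.mem_Ioi.mp hs)))
      have hφd : HasDerivAt φ d s := hd.hasDerivAt (Ici_mem_nhds hs)
      have hexp : HasDerivAt (fun s : ℝ => Real.exp (-(2 * Λ) * s))
          (Real.exp (-(2 * Λ) * s) * (-(2 * Λ))) s := by
        have : HasDerivAt (fun s : ℝ => -(2 * Λ) * s) (-(2 * Λ)) s := by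
          simpa using (hasDerivAt_id s).const_mul (-(2 * Λ))
        exact this.exp
      have := hφd.mul hexp
      refine ⟨_, ?_, this⟩
      have hE : 0 < Real.exp (-(2 * Λ) * s) := Real.exp_pos _
      nlinarith
    have hψcont : ContinuousOn ψ (Set.Ici 0) := by
      intro s hs
      obtain ⟨d, hd, _⟩ := hφderiv s hs
      exact (hd.continuousWithinAt.mul ((Real.continuous_exp.comp
        (continuous_const.mul continuous_id)).continuousWithinAt))
    have hanti : AntitoneOn ψ (Set.Ici 0) := by
      apply antitoneOn_of_deriv_nonpos (convex_Ici 0) hψcont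
      · intro s hs
        rw [interior_Ici] at hs
        obtain ⟨d, _, hd⟩ := hψderiv s hs
        exact hd.differentiableAt.differentiableWithinAt
      · intro s hs
        rw [interior_Ici] at hs
        obtain ⟨d, hdle, hd⟩ := hψderiv s hs
        rw [hd.deriv]; exact hdle
    have hψt : ψ t ≤ ψ 0 := hanti (Set.self_mem_Ici) ht ht
    have hφ0 : φ 0 = ⟪(g : Lp ℝ 2 μ), (g : Lp ℝ 2 μ) + S (g : Lp ℝ 2 μ)⟫ := by
      simp only [hφ, hu, hQ0, ContinuousLinearMap.id_apply]
    have hψ0 : ψ 0 = φ 0 := by simp [hψ]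
    have hφt : φ t ≤ Real.exp (2 * Λ * t) * φ 0 := by
      have hE : 0 < Real.exp (-(2 * Λ) * t) := Real.exp_pos _
      have : φ t * Real.exp (-(2 * Λ) * t) ≤ φ 0 := by rw [← hψ0]; exact hψt
      have h2 : Real.exp (2 * Λ * t) * Real.exp (-(2 * Λ) * t) = 1 := by
        rw [← Real.exp_add]; ring_nf; exact Real.exp_zero
      have h4 : φ t = Real.exp (2 * Λ * t) * (φ t * Real.exp (-(2 * Λ) * t)) := by
        rw [mul_comm (φ t) _, ← mul_assoc, h2, one_mul]
      have h5 := mul_le_mul_of_nonneg_left this (Real.exp_pos (2 * Λ * t)).le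
      linarith
    calc Real.sqrt ⟪Q t (g : Lp ℝ 2 μ), Q t (g : Lp ℝ 2 μ) + S (Q t (g : Lp ℝ 2 μ))⟫
        = Real.sqrt (φ t) := rfl
      _ ≤ Real.sqrt (Real.exp (2 * Λ * t) * φ 0) := Real.sqrt_le_sqrt hφt
      _ = Real.exp (t * Λ) * Real.sqrt (φ 0) := by
          rw [Real.sqrt_mul (Real.exp_pos _).le]
          congr 1
          rw [show (2 : ℝ) * Λ * t = (t * Λ) + (t * Λ) by ring, Real.exp_add,
            Real.sqrt_mul_self (Real.exp_pos _).le]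
      _ = Real.exp (t * Λ) * Real.sqrt ⟪(g : Lp ℝ 2 μ), (g : Lp ℝ 2 μ) + S (g : Lp ℝ 2 μ)⟫ := by
          rw [hφ0]
  -- extend by density
  have hclosed : IsClosed {f : Lp ℝ 2 μ |
      Real.sqrt ⟪Q t f, Q t f + S (Q t f)⟫ ≤ Real.exp (t * Λ) * Real.sqrt ⟪f, f + S f⟫} := by
    apply isClosed_le
    · exact Real.continuous_sqrt.comp ((Q t).continuous.inner
        ((Q t).continuous.add (S.continuous.comp (Q t).continuous)))
    · exact continuous_const.mul (Real.continuous_sqrt.comp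
        (continuous_id.inner (continuous_id.add S.continuous)))
  have hsub : (L.domain : Set (Lp ℝ 2 μ)) ⊆ {f : Lp ℝ 2 μ |
      Real.sqrt ⟪Q t f, Q t f + S (Q t f)⟫ ≤ Real.exp (t * Λ) * Real.sqrt ⟪f, f + S f⟫} :=
    fun x hx => main ⟨x, hx⟩
  have := hclosed.closure_subset_iff.mpr hsub
  rw [hdense.closure_eq] at this
  exact this (Set.mem_univ f)
end

section
/- Let μ be a probability measure and S a bounded symmetric linear operator on L²(μ) such that ‖Sh‖₂ ≤ (1/2)‖h − μh‖₂ for all h ∈ L²(μ) (in particular S annihilates constant functions). Let V ∈ L^∞(μ) with μV = 0, and let f ∈ L²(μ) with ‖f‖₂ = 1 and μf ≠ 0; set γ = √(1/(μf)² − 1). Then ⟨f, (Id+S)(Vf)⟩ ≤ (3γ²/(2(1+γ²)))·‖V‖_∞ + (5γ/(2(1+γ²)))·‖V‖₂. -/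
open MeasureTheory
open scoped RealInnerProductSpace ENNReal

set_option maxHeartbeats 1000000 in
/-- Let `S` be bounded symmetric on `L²(μ)` with
`‖Sh‖₂ ≤ ½‖h − μh‖₂` for all `h`, let `V ∈ L^∞(μ)` with `μV = 0` act by multiplication
(operator `M`), and let `f ∈ L²(μ)` with `‖f‖₂ = 1`, `μf ≠ 0`, `γ = √(1/(μf)² − 1)`.
Then `⟨f, (Id+S)(Vf)⟩ ≤ (3γ²/(2(1+γ²)))‖V‖_∞ + (5γ/(2(1+γ²)))‖V‖₂`. -/
theorem modified_inner_product_multiplication_bound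
    {E : Type*} [MeasurableSpace E] (μ : Measure E) [IsProbabilityMeasure μ]
    (S : Lp ℝ 2 μ →L[ℝ] Lp ℝ 2 μ)
    (hSsym : ∀ f g : Lp ℝ 2 μ, ⟪S f, g⟫ = ⟪f, S g⟫)
    (hSbound : ∀ h : Lp ℝ 2 μ, ‖S h‖ ≤ (1 / 2) * ‖h - Lp.const 2 μ (∫ x, h x ∂μ)‖)
    (V : E → ℝ) (hV : MemLp V ⊤ μ) (hVmean : ∫ x, V x ∂μ = 0)
    (M : Lp ℝ 2 μ →L[ℝ] Lp ℝ 2 μ)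
    (hM : ∀ f : Lp ℝ 2 μ, M f =ᵐ[μ] fun x => V x * f x)
    (f : Lp ℝ 2 μ) (hfnorm : ‖f‖ = 1) (hfmean : ∫ x, f x ∂μ ≠ 0)
    (γ : ℝ) (hγ : γ = Real.sqrt (1 / (∫ x, f x ∂μ) ^ 2 - 1)) :
    ⟪f, M f + S (M f)⟫
      ≤ (3 * γ ^ 2 / (2 * (1 + γ ^ 2))) * (eLpNorm V ⊤ μ).toReal
        + (5 * γ / (2 * (1 + γ ^ 2))) * (eLpNorm V 2 μ).toReal := by
  have sqle : ∀ a b : ℝ, 0 ≤ b → a ^ 2 ≤ b ^ 2 → a ≤ b := fun a b hb h => by nlinarith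
  set m := ∫ x, f x ∂μ with hm
  -- basic L² facts
  have hinner : ∀ a b : Lp ℝ 2 μ, ⟪a, b⟫ = ∫ x, a x * b x ∂μ := by
    intro a b; rw [L2.inner_def]; simp [RCLike.inner_apply]; exact integral_congr_ae (Filter.Eventually.of_forall fun x => mul_comm _ _)
  have hconst_int : ∀ c : ℝ, ∫ x, (Lp.const 2 μ c : Lp ℝ 2 μ) x ∂μ = c := by
    intro c
    rw [integral_congr_ae (Lp.coeFn_const 2 μ c)]; simp
  have hconst_inner : ∀ (c : ℝ) (a : Lp ℝ 2 μ), ⟪(Lp.const 2 μ c : Lp ℝ 2 μ), a⟫ = c * ∫ x, a x ∂μ := by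
    intro c a
    rw [hinner, ← integral_const_mul]
    refine integral_congr_ae ?_
    filter_upwards [Lp.coeFn_const 2 μ c] with x hx
    rw [hx]; rfl
  have hconst_norm_sq : ∀ c : ℝ, ‖(Lp.const 2 μ c : Lp ℝ 2 μ)‖ ^ 2 = c ^ 2 := by
    intro c
    rw [← real_inner_self_eq_norm_sq, hconst_inner, hconst_int]; ring
  -- centering
  have hcenter : ∀ h : Lp ℝ 2 μ, ‖h - Lp.const 2 μ (∫ x, h x ∂μ)‖ ≤ ‖h‖ := by
    intro h
    refine sqle _ _ (norm_nonneg _) ?_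
    rw [norm_sub_sq_real, hconst_norm_sq, real_inner_comm, hconst_inner]
    nlinarith [sq_nonneg (∫ x, h x ∂μ)]
  -- S kills constants
  have hSconst : ∀ c : ℝ, S (Lp.const 2 μ c) = 0 := by
    intro c
    have h1 := hSbound (Lp.const 2 μ c)
    rw [hconst_int c, sub_self, norm_zero, mul_zero] at h1
    exact norm_le_zero_iff.mp h1
  -- V as an L² element
  have hV2 : MemLp V 2 μ := hV.mono_exponent le_top
  set VL : Lp ℝ 2 μ := hV2.toLp V with hVLdef
  have hVLnorm : ‖VL‖ = (eLpNorm V 2 μ).toReal := Lp.norm_toLp V hV2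
  have hVLcoe : VL =ᵐ[μ] V := hV2.coeFn_toLp
  set K := (eLpNorm V ⊤ μ).toReal with hK
  set K2 := (eLpNorm V 2 μ).toReal with hK2
  have hVbdd : ∀ᵐ x ∂μ, |V x| ≤ K := by
    have h1 : ∀ᵐ x ∂μ, ‖V x‖ₑ ≤ eLpNorm V ⊤ μ := by
      simpa [eLpNorm_exponent_top] using ae_le_eLpNormEssSup (f := V) (μ := μ)
    filter_upwards [h1] with x hx
    have h2 : eLpNorm V ⊤ μ ≠ ⊤ := hV.2.ne
    have := ENNReal.toReal_mono h2 hx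
    simpa [Real.norm_eq_abs, hK] using this
  have hKpos : 0 ≤ K := ENNReal.toReal_nonneg
  -- the centered part of f
  set g : Lp ℝ 2 μ := f - Lp.const 2 μ m with hgdef
  have hg_coe : (g : Lp ℝ 2 μ) =ᵐ[μ] fun x => f x - m := by
    filter_upwards [Lp.coeFn_sub f (Lp.const 2 μ m), Lp.coeFn_const 2 μ m] with x h1 h2
    rw [hgdef, h1]; simp only [Pi.sub_apply]; rw [h2]; rfl
  have hf_dec : f = Lp.const 2 μ m + g := by rw [hgdef]; abel
  have hm_abs : |m| ≤ 1 := by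
    have h1 := abs_real_inner_le_norm (Lp.const 2 μ (1:ℝ)) f
    rw [hconst_inner, hfnorm, one_mul, mul_one] at h1
    have h2 : ‖(Lp.const 2 μ (1:ℝ) : Lp ℝ 2 μ)‖ = 1 := by
      have := hconst_norm_sq 1
      nlinarith [norm_nonneg (Lp.const 2 μ (1:ℝ) : Lp ℝ 2 μ)]
    rw [h2] at h1; exact h1
  have hm2pos : 0 < m ^ 2 := by positivity
  have hγ2 : γ ^ 2 = 1 / m ^ 2 - 1 := by
    rw [hγ, Real.sq_sqrt]
    have hmsq : m ^ 2 ≤ 1 := by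
      nlinarith [sq_abs m, abs_nonneg m, mul_le_mul hm_abs hm_abs (abs_nonneg m) zero_le_one]
    have h3 : (1:ℝ) ≤ 1 / m ^ 2 := by rw [le_div_iff₀ hm2pos]; linarith
    linarith
  have hγpos : 0 ≤ γ := by rw [hγ]; exact Real.sqrt_nonneg _
  have hmγ : m ^ 2 * (1 + γ ^ 2) = 1 := by
    rw [hγ2]; field_simp; ring
  have hgnorm_sq : ‖g‖ ^ 2 = 1 - m ^ 2 := by
    rw [hgdef, norm_sub_sq_real, hconst_norm_sq, real_inner_comm, hconst_inner, ← hm, hfnorm]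
    ring
  have hgnorm : ‖g‖ = |m| * γ := by
    have h1 : (|m| * γ) ^ 2 = ‖g‖ ^ 2 := by
      rw [hgnorm_sq, mul_pow, sq_abs, hγ2]; field_simp
    have h2 : 0 ≤ |m| * γ := by positivity
    nlinarith [norm_nonneg g]
  -- decompose M f
  set W1 : Lp ℝ 2 μ := m • VL with hW1def
  set W2 : Lp ℝ 2 μ := M f - W1 with hW2def
  have hMf_dec : M f = W1 + W2 := by rw [hW2def]; abel
  have hW1coe : (W1 : Lp ℝ 2 μ) =ᵐ[μ] fun x => m * V x := by
    filter_upwards [Lp.coeFn_smul m VL, hVLcoe] with x h1 h2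
    rw [hW1def, h1]; simp [h2]
  have hW2coe : (W2 : Lp ℝ 2 μ) =ᵐ[μ] fun x => V x * g x := by
    filter_upwards [Lp.coeFn_sub (M f) W1, hM f, hW1coe, hg_coe] with x h1 h2 h3 h4
    rw [hW2def, h1]
    simp only [Pi.sub_apply]
    rw [h2, h3, h4]; ring
  have hW1norm : ‖W1‖ = |m| * K2 := by
    rw [hW1def, norm_smul, hVLnorm]; simp [Real.norm_eq_abs, hK2]
  have hW1int : ∫ x, W1 x ∂μ = 0 := by
    rw [integral_congr_ae hW1coe, integral_const_mul, hVmean, mul_zero]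
  have hW2int : ∫ x, W2 x ∂μ = ⟪VL, g⟫ := by
    rw [hinner]
    refine integral_congr_ae ?_
    filter_upwards [hW2coe, hVLcoe] with x h1 h2
    rw [h1, h2]
  have hW2norm : ‖W2‖ ≤ K * ‖g‖ := by
    refine sqle _ _ (by positivity) ?_
    have h1 : ‖W2‖ ^ 2 = ∫ x, W2 x * W2 x ∂μ := by
      rw [← real_inner_self_eq_norm_sq, hinner]
    have h2 : ‖g‖ ^ 2 = ∫ x, g x * g x ∂μ := by
      rw [← real_inner_self_eq_norm_sq, hinner]
    rw [h1, mul_pow, h2, ← integral_const_mul]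
    refine integral_mono_ae ((Lp.memLp W2).integrable_sq.congr ?_)
      (((Lp.memLp g).integrable_sq.congr ?_).const_mul _) ?_
    · filter_upwards with x; ring
    · filter_upwards with x; ring
    · filter_upwards [hW2coe, hVbdd] with x h1 h2
      rw [h1]
      have hV2x : V x ^ 2 ≤ K ^ 2 := by
        nlinarith [sq_abs (V x), abs_nonneg (V x), mul_le_mul h2 h2 (abs_nonneg (V x)) hKpos]
      nlinarith [sq_nonneg ((g : E → ℝ) x), hV2x]
  -- term estimates
  have hT1 : ⟪(Lp.const 2 μ m : Lp ℝ 2 μ), W1⟫ = 0 := by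
    rw [hconst_inner, hW1int, mul_zero]
  have hT2 : ⟪g, W1⟫ ≤ |m| * K2 * ‖g‖ := by
    calc ⟪g, W1⟫ ≤ |⟪g, W1⟫| := le_abs_self _
    _ ≤ ‖g‖ * ‖W1‖ := abs_real_inner_le_norm _ _
    _ = |m| * K2 * ‖g‖ := by rw [hW1norm]; ring
  have hT3 : ⟪(Lp.const 2 μ m : Lp ℝ 2 μ), W2⟫ ≤ |m| * K2 * ‖g‖ := by
    rw [hconst_inner, hW2int]
    calc m * ⟪VL, g⟫ ≤ |m * ⟪VL, g⟫| := le_abs_self _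
    _ = |m| * |⟪VL, g⟫| := abs_mul _ _
    _ ≤ |m| * (‖VL‖ * ‖g‖) := by
        gcongr; exact abs_real_inner_le_norm _ _
    _ = |m| * K2 * ‖g‖ := by rw [hVLnorm]; ring
  have hT4 : ⟪g, W2⟫ ≤ K * ‖g‖ ^ 2 := by
    calc ⟪g, W2⟫ ≤ |⟪g, W2⟫| := le_abs_self _
    _ ≤ ‖g‖ * ‖W2‖ := abs_real_inner_le_norm _ _
    _ ≤ ‖g‖ * (K * ‖g‖) := by gcongr
    _ = K * ‖g‖ ^ 2 := by ring
  have hA : ⟪f, M f⟫ ≤ 2 * (|m| * K2 * ‖g‖) + K * ‖g‖ ^ 2 := by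
    nth_rewrite 1 [hf_dec, hMf_dec]
    rw [inner_add_left, inner_add_right, inner_add_right, hT1]
    linarith
  -- second term
  have hSW1 : ‖S W1‖ ≤ 1 / 2 * (|m| * K2) := by
    have h1 := hSbound W1
    rw [hW1int] at h1
    have h2 : (Lp.const 2 μ (0:ℝ) : Lp ℝ 2 μ) = 0 := map_zero (Lp.const 2 μ)
    rw [h2, sub_zero, hW1norm] at h1
    exact h1
  have hSW2 : ‖S W2‖ ≤ 1 / 2 * (K * ‖g‖) := by
    refine (hSbound W2).trans ?_
    have := (hcenter W2).trans hW2norm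
    linarith
  have hB : ⟪f, S (M f)⟫ ≤ 1 / 2 * (|m| * K2 * ‖g‖) + 1 / 2 * (K * ‖g‖ ^ 2) := by
    nth_rewrite 1 [hf_dec]
    rw [inner_add_left, ← hSsym, hSconst, inner_zero_left, zero_add, hMf_dec, map_add,
      inner_add_right]
    have h1 : ⟪g, S W1⟫ ≤ ‖g‖ * ‖S W1‖ := real_inner_le_norm _ _
    have h2 : ⟪g, S W2⟫ ≤ ‖g‖ * ‖S W2‖ := real_inner_le_norm _ _
    have h3 : ‖g‖ * ‖S W1‖ ≤ ‖g‖ * (1 / 2 * (|m| * K2)) := by gcongr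
    have h4 : ‖g‖ * ‖S W2‖ ≤ ‖g‖ * (1 / 2 * (K * ‖g‖)) := by gcongr
    have h5 : ‖g‖ * (1 / 2 * (|m| * K2)) = 1 / 2 * (|m| * K2 * ‖g‖) := by ring
    have h6 : ‖g‖ * (1 / 2 * (K * ‖g‖)) = 1 / 2 * (K * ‖g‖ ^ 2) := by ring
    linarith
  -- combine
  have hkey : ⟪f, M f + S (M f)⟫ ≤ 5 / 2 * (|m| * K2 * ‖g‖) + 3 / 2 * (K * ‖g‖ ^ 2) := by
    rw [inner_add_right]
    linarith [hA, hB]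
  refine hkey.trans ?_
  have h3 : (0:ℝ) < 1 + γ ^ 2 := by positivity
  have hm2 : m ^ 2 = 1 / (1 + γ ^ 2) := by rw [eq_div_iff (ne_of_gt h3)]; exact hmγ
  have hq1 : |m| * K2 * ‖g‖ = m ^ 2 * γ * K2 := by
    rw [hgnorm, ← sq_abs]; ring
  have hq2 : K * ‖g‖ ^ 2 = m ^ 2 * γ ^ 2 * K := by
    rw [hgnorm, mul_pow, sq_abs]; ring
  rw [hq1, hq2, hm2]
  apply le_of_eq
  field_simp
  ring
end

section
/- Let μ be a probability measure, L an operator on L²(μ) with domain D(L), ρ > 0 and S a bounded symmetric operator on L²(μ) such that for all f ∈ D(L): ‖Sf‖₂ ≤ (1/2)‖f − μf‖₂ and ⟨f, Lf + S(Lf)⟩ ≤ −ρ‖f − μf‖₂². Let V ∈ L^∞(μ) with μV = 0 and 3‖V‖_∞ < 2ρ. Then Λ(V) := sup{ ⟨f, (L+V)f⟩_B : f ∈ D(L), ‖f‖_B = 1 } satisfies Λ(V) ≤ 25‖V‖₂² / (4ρ − 6‖V‖_∞), where ⟨f,g⟩_B = ⟨f, (Id+S)g⟩ and ‖f‖_B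 = √⟨f,f⟩_B. -/
open MeasureTheory
open scoped RealInnerProductSpace ENNReal

set_option maxHeartbeats 2000000

/-- Under hypothesis (H) for `(L, S, ρ)`, if `V ∈ L^∞(μ)` with `μV = 0`
and `3‖V‖_∞ < 2ρ`, then `Λ(V) = sup{⟨f,(L+V)f⟩_B : f ∈ D(L), ‖f‖_B = 1}` satisfies
`Λ(V) ≤ 25‖V‖₂²/(4ρ − 6‖V‖_∞)`. -/
theorem lambda_V_bound
    {E : Type*} [MeasurableSpace E] (μ : Measure E) [IsProbabilityMeasure μ]
    (L : Lp ℝ 2 μ →ₗ.[ℝ] Lp ℝ 2 μ)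
    (ρ : ℝ) (hρ : 0 < ρ)
    (S : Lp ℝ 2 μ →L[ℝ] Lp ℝ 2 μ)
    (hSsym : ∀ f g : Lp ℝ 2 μ, ⟪S f, g⟫ = ⟪f, S g⟫)
    (hS1 : ∀ f : L.domain,
      ‖S f‖ ≤ (1 / 2) * ‖(f : Lp ℝ 2 μ) - Lp.const 2 μ (∫ x, (f : Lp ℝ 2 μ) x ∂μ)‖)
    (hS2 : ∀ f : L.domain,
      ⟪(f : Lp ℝ 2 μ), L f + S (L f)⟫
        ≤ -ρ * ‖(f : Lp ℝ 2 μ) - Lp.const 2 μ (∫ x, (f : Lp ℝ 2 μ) x ∂μ)‖ ^ 2)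
    (V : E → ℝ) (hV : MemLp V ⊤ μ) (hVmean : ∫ x, V x ∂μ = 0)
    (M : Lp ℝ 2 μ →L[ℝ] Lp ℝ 2 μ)
    (hM : ∀ f : Lp ℝ 2 μ, M f =ᵐ[μ] fun x => V x * f x)
    (hVsmall : 3 * (eLpNorm V ⊤ μ).toReal < 2 * ρ) :
    sSup {a : ℝ | ∃ f : L.domain,
        Real.sqrt ⟪(f : Lp ℝ 2 μ), (f : Lp ℝ 2 μ) + S (f : Lp ℝ 2 μ)⟫ = 1 ∧
        a = ⟪(f : Lp ℝ 2 μ), (L f + M (f : Lp ℝ 2 μ)) + S (L f + M (f : Lp ℝ 2 μ))⟫}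
      ≤ 25 * (eLpNorm V 2 μ).toReal ^ 2 / (4 * ρ - 6 * (eLpNorm V ⊤ μ).toReal) := by
  set ε := (eLpNorm V ⊤ μ).toReal with hεdef
  set ν := (eLpNorm V 2 μ).toReal with hνdef
  have hε0 : 0 ≤ ε := ENNReal.toReal_nonneg
  have hν0 : 0 ≤ ν := ENNReal.toReal_nonneg
  have hA : 0 < 4 * ρ - 6 * ε := by linarith
  -- inner product in real L² is the integral of the product
  have hinner : ∀ u v : Lp ℝ 2 μ, ⟪u, v⟫ = ∫ x, u x * v x ∂μ := by
    intro u v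
    rw [L2.inner_def]
    simp [RCLike.inner_apply, mul_comm]
  have hV2 : MemLp V 2 μ := hV.mono_exponent le_top
  set W : Lp ℝ 2 μ := hV2.toLp V with hWdef
  have hWnorm : ‖W‖ = ν := Lp.norm_toLp V hV2
  have hWint : ∀ h : Lp ℝ 2 μ, ∫ x, V x * h x ∂μ = ⟪W, h⟫ := by
    intro h
    rw [hinner]
    refine integral_congr_ae ?_
    filter_upwards [hV2.coeFn_toLp] with x hx
    rw [hx]
  -- ‖M h‖ ≤ ε * ‖h‖
  have hMnorm : ∀ h : Lp ℝ 2 μ, ‖M h‖ ≤ ε * ‖h‖ := by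
    intro h
    have h1 : eLpNorm (⇑(M h)) 2 μ = eLpNorm (fun x => V x * h x) 2 μ :=
      eLpNorm_congr_ae (hM h)
    have h2 : eLpNorm (fun x => V x * h x) 2 μ ≤ eLpNorm V ∞ μ * eLpNorm (⇑h) 2 μ := by
      have := eLpNorm_smul_le_eLpNorm_top_mul_eLpNorm (𝕜 := ℝ) 2
        (Lp.aestronglyMeasurable h) V
      simpa [Pi.smul_apply', smul_eq_mul, Pi.mul_def] using this
    rw [Lp.norm_def, Lp.norm_def, hεdef, ← ENNReal.toReal_mul]
    exact ENNReal.toReal_mono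
      (ENNReal.mul_ne_top hV.2.ne (Lp.eLpNorm_lt_top h).ne) (h1 ▸ h2)
  -- symmetry of M
  have hMsym : ∀ u v : Lp ℝ 2 μ, ⟪u, M v⟫ = ⟪M u, v⟫ := by
    intro u v
    rw [hinner, hinner]
    refine integral_congr_ae ?_
    filter_upwards [hM u, hM v] with x h1 h2
    rw [h1, h2]; ring
  refine Real.sSup_le ?_ (by positivity)
  rintro a ⟨f, hf1, rfl⟩
  set F : Lp ℝ 2 μ := (f : Lp ℝ 2 μ) with hFdef
  set c : ℝ := ∫ x, F x ∂μ with hcdef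
  set C : Lp ℝ 2 μ := Lp.const 2 μ c with hCdef
  set g : Lp ℝ 2 μ := F - C with hgdef
  have hFeq : F = C + g := by rw [hgdef]; abel
  have hFi : Integrable (⇑F) μ := (Lp.memLp F).integrable one_le_two
  have hCi : Integrable (⇑C) μ := (Lp.memLp C).integrable one_le_two
  have hintC : ∫ x, C x ∂μ = c := by
    rw [integral_congr_ae (Lp.coeFn_const 2 μ c)]
    simp
  have hintg : ∫ x, g x ∂μ = 0 := by
    have h1 : ∫ x, g x ∂μ = ∫ x, (F x - C x) ∂μ := by
      refine integral_congr_ae ?_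
      filter_upwards [Lp.coeFn_sub F C] with x hx
      exact hx
    rw [h1, integral_sub hFi hCi, hintC, sub_self]
  -- ⟪C, h⟫ = c * ∫ h
  have hCh : ∀ h : Lp ℝ 2 μ, ⟪C, h⟫ = c * ∫ x, h x ∂μ := by
    intro h
    rw [hinner]
    have h1 : ∫ x, C x * h x ∂μ = ∫ x, c * h x ∂μ := by
      refine integral_congr_ae ?_
      filter_upwards [Lp.coeFn_const 2 μ c] with x hx
      rw [hx]; rfl
    rw [h1, integral_const_mul]
  have hCC : ⟪C, C⟫ = c ^ 2 := by rw [hCh, hintC]; ring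
  have hCg : ⟪C, g⟫ = 0 := by rw [hCh, hintg, mul_zero]
  have hnormC : ‖C‖ ≤ |c| := by
    have h1 : ‖C‖ ^ 2 = c ^ 2 := by rw [← real_inner_self_eq_norm_sq, hCC]
    nlinarith [norm_nonneg C, abs_nonneg c, sq_abs c]
  set s : ℝ := ‖g‖ with hsdef
  set t : ℝ := |c| with htdef
  have hs0 : 0 ≤ s := norm_nonneg g
  have ht0 : 0 ≤ t := abs_nonneg c
  have hFF : ⟪F, F⟫ = c ^ 2 + s ^ 2 := by
    rw [hFeq, real_inner_add_add_self, hCC, hCg, real_inner_self_eq_norm_sq]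
    ring
  have hnormF : ‖F‖ ≤ t + s := by
    calc ‖F‖ = ‖C + g‖ := by rw [← hFeq]
    _ ≤ ‖C‖ + ‖g‖ := norm_add_le _ _
    _ ≤ t + s := by exact add_le_add hnormC le_rfl
  have hSF : ‖S F‖ ≤ 1 / 2 * s := hS1 f
  -- the norm-one constraint gives t² - t s / 2 + s²/2 ≤ 1
  have hBnorm : ⟪F, F + S F⟫ = 1 := by
    rw [← Real.sqrt_eq_one]
    exact hf1
  have hFSF : |⟪F, S F⟫| ≤ (t + s) * (1 / 2 * s) := by
    calc |⟪F, S F⟫| ≤ ‖F‖ * ‖S F‖ := abs_real_inner_le_norm F (S F)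
    _ ≤ (t + s) * (1 / 2 * s) :=
      mul_le_mul hnormF hSF (norm_nonneg _) (by linarith)
  have hkey1 : c ^ 2 + s ^ 2 - (t + s) * (1 / 2 * s) ≤ 1 := by
    have h1 : ⟪F, F + S F⟫ = ⟪F, F⟫ + ⟪F, S F⟫ := inner_add_right F F (S F)
    have h2 := abs_le.mp hFSF
    rw [h1, hFF] at hBnorm
    linarith [h2.1]
  have ht4 : t ^ 2 ≤ 4 := by
    have hts : t * s ≤ (t ^ 2 + s ^ 2) / 2 := by nlinarith [sq_nonneg (t - s)]
    have hcc : c ^ 2 = t ^ 2 := (sq_abs c).symm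
    nlinarith
  -- bound on the M-part of the quadratic form
  have hMC : ‖M C‖ ≤ t * ν := by
    have h1 : eLpNorm (⇑(M C)) 2 μ = eLpNorm (c • V) 2 μ := by
      refine eLpNorm_congr_ae ?_
      filter_upwards [hM C, Lp.coeFn_const 2 μ c] with x h1 h2
      rw [h1, h2]
      simp [Function.const, mul_comm]
    have h2 : eLpNorm (c • V) 2 μ ≤ ‖c‖₊ • eLpNorm V 2 μ := eLpNorm_const_smul_le
    rw [Lp.norm_def, h1]
    calc (eLpNorm (c • V) 2 μ).toReal ≤ ((‖c‖₊ : ℝ≥0∞) * eLpNorm V 2 μ).toReal := by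
          refine ENNReal.toReal_mono (ENNReal.mul_ne_top ENNReal.coe_ne_top hV2.2.ne) ?_
          rw [ENNReal.smul_def, smul_eq_mul] at h2
          exact h2
    _ = t * ν := by
          rw [ENNReal.toReal_mul, hνdef]
          simp [htdef, Real.norm_eq_abs]
  have hMg : ‖M g‖ ≤ ε * s := hMnorm g
  have hCMC : ⟪C, M C⟫ = 0 := by
    rw [hCh]
    have h1 : ∫ x, (M C) x ∂μ = ∫ x, V x * c ∂μ := by
      refine integral_congr_ae ?_
      filter_upwards [hM C, Lp.coeFn_const 2 μ c] with x h1 h2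
      rw [h1, h2]; rfl
    rw [h1, integral_mul_const, hVmean, zero_mul, mul_zero]
  have hCMg : |⟪C, M g⟫| ≤ t * ν * s := by
    rw [hMsym]
    calc |⟪M C, g⟫| ≤ ‖M C‖ * ‖g‖ := abs_real_inner_le_norm _ _
    _ ≤ t * ν * s := mul_le_mul_of_nonneg_right hMC hs0
  have hgMC : |⟪g, M C⟫| ≤ t * ν * s := by
    calc |⟪g, M C⟫| ≤ ‖g‖ * ‖M C‖ := abs_real_inner_le_norm _ _
    _ = ‖M C‖ * ‖g‖ := mul_comm _ _
    _ ≤ t * ν * s := mul_le_mul_of_nonneg_right hMC hs0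
  have hgMg : |⟪g, M g⟫| ≤ ε * s ^ 2 := by
    calc |⟪g, M g⟫| ≤ ‖g‖ * ‖M g‖ := abs_real_inner_le_norm _ _
    _ ≤ s * (ε * s) := mul_le_mul_of_nonneg_left hMg hs0
    _ = ε * s ^ 2 := by ring
  have hMFnorm : ‖M F‖ ≤ t * ν + ε * s := by
    have h1 : M F = M C + M g := by rw [hFeq, map_add]
    calc ‖M F‖ = ‖M C + M g‖ := by rw [h1]
    _ ≤ ‖M C‖ + ‖M g‖ := norm_add_le _ _
    _ ≤ t * ν + ε * s := add_le_add hMC hMg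
  have hFMF : ⟪F, M F⟫ ≤ 2 * (t * ν * s) + ε * s ^ 2 := by
    have h1 : M F = M C + M g := by rw [hFeq, map_add]
    have h2 : ⟪F, M F⟫ = ⟪C, M C⟫ + ⟪C, M g⟫ + ⟪g, M C⟫ + ⟪g, M g⟫ := by
      rw [h1, hFeq, inner_add_left, inner_add_right, inner_add_right]
      ring
    rw [h2, hCMC]
    have := abs_le.mp hCMg
    have := abs_le.mp hgMC
    have := abs_le.mp hgMg
    linarith [this.1]
  have hFSMF : ⟪F, S (M F)⟫ ≤ 1 / 2 * s * (t * ν + ε * s) := by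
    rw [← hSsym]
    calc ⟪S F, M F⟫ ≤ ‖S F‖ * ‖M F‖ := real_inner_le_norm _ _
    _ ≤ 1 / 2 * s * (t * ν + ε * s) := by
        refine mul_le_mul hSF hMFnorm (norm_nonneg _) (by linarith)
  -- the L-part
  have hLpart : ⟪F, L f + S (L f)⟫ ≤ -ρ * s ^ 2 := hS2 f
  -- split the quadratic form
  have hsplit : ⟪F, (L f + M F) + S (L f + M F)⟫
      = ⟪F, L f + S (L f)⟫ + (⟪F, M F⟫ + ⟪F, S (M F)⟫) := by
    rw [map_add]
    rw [show (L f + M F) + (S (L f) + S (M F)) = (L f + S (L f)) + (M F + S (M F)) by abel]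
    simp [inner_add_right]
  rw [hsplit, le_div_iff₀ hA]
  have habound : ⟪F, L f + S (L f)⟫ + (⟪F, M F⟫ + ⟪F, S (M F)⟫)
      ≤ -ρ * s ^ 2 + (5 / 2 * (t * ν) * s + 3 / 2 * ε * s ^ 2) := by
    have := hFMF; have := hFSMF
    nlinarith
  have hsq1 : 0 ≤ ((2 * ρ - 3 * ε) * s - 5 / 2 * (t * ν)) ^ 2 := sq_nonneg _
  have hsq2 : 0 ≤ (4 - t ^ 2) * ν ^ 2 :=
    mul_nonneg (by linarith) (sq_nonneg ν)
  nlinarith [mul_le_mul_of_nonneg_right habound hA.le]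
end

section
/- For all real numbers λ₀ > 0, β > 0 and r ≥ 0, one has sup_{λ ∈ [0, λ₀)} ( λ r − β λ² / (λ₀ − λ) ) = λ₀ r² / ( β (1 + √(1 + r/β))² ), and moreover λ₀ r² / ( β (1 + √(1 + r/β))² ) ≥ λ₀ r² / ( 4(β + r) ). -/
/-- For `λ₀, β > 0` and `r ≥ 0`,
`sup_{λ ∈ [0, λ₀)} (λ r − β λ²/(λ₀ − λ)) = λ₀ r² / (β (1 + √(1 + r/β))²)`, and this
quantity is at least `λ₀ r² / (4(β + r))`. -/
theorem sup_legendre_transform (lam0 β r : ℝ) (hlam0 : 0 < lam0) (hβ : 0 < β) (hr : 0 ≤ r) :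
    sSup ((fun l : ℝ => l * r - β * l ^ 2 / (lam0 - l)) '' Set.Ico 0 lam0)
        = lam0 * r ^ 2 / (β * (1 + Real.sqrt (1 + r / β)) ^ 2) ∧
      lam0 * r ^ 2 / (4 * (β + r))
        ≤ lam0 * r ^ 2 / (β * (1 + Real.sqrt (1 + r / β)) ^ 2) := by
  set q := Real.sqrt (β * (β + r)) with hqdef
  have hq2 : q ^ 2 = β * (β + r) := Real.sq_sqrt (by positivity)
  have hq0 : 0 ≤ q := Real.sqrt_nonneg _
  have hqβ : β ≤ q := by nlinarith
  have hqpos : 0 < q := lt_of_lt_of_le hβ hqβ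
  have h1 : (1 : ℝ) + r / β = (q / β) ^ 2 := by
    field_simp
    nlinarith
  have hs : Real.sqrt (1 + r / β) = q / β := by
    rw [h1, Real.sqrt_sq (by positivity)]
  have hrβ : r * β = q ^ 2 - β ^ 2 := by nlinarith
  have hM : lam0 * r ^ 2 / (β * (1 + Real.sqrt (1 + r / β)) ^ 2)
      = lam0 * (q - β) ^ 2 / β := by
    rw [hs]
    field_simp
    linear_combination (r * β + q ^ 2 - β ^ 2) * hrβ
  rw [hM]
  constructor
  · apply IsGreatest.csSup_eq
    constructor
    · refine ⟨lam0 * (q - β) / q, ⟨?_, ?_⟩, ?_⟩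
      · have hqb : 0 ≤ q - β := by linarith
        positivity
      · rw [div_lt_iff₀ hqpos]
        nlinarith
      · have hne : lam0 - lam0 * (q - β) / q = lam0 * β / q := by
          field_simp; ring
        simp only [hne]
        field_simp
        linear_combination (q - β) * hrβ
    · rintro x ⟨l, ⟨hl0, hl1⟩, rfl⟩
      simp only
      have ht : 0 < lam0 - l := by linarith
      rw [sub_le_comm, le_div_iff₀ ht, ← sub_nonneg]
      have hexp : β * l ^ 2 - (l * r - lam0 * (q - β) ^ 2 / β) * (lam0 - l)
          = ((q * (lam0 - l) - β * lam0) ^ 2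
              + l * (lam0 - l) * (q ^ 2 - β ^ 2 - r * β)) / β := by
        field_simp
        ring
      rw [hexp]
      have h0 : q ^ 2 - β ^ 2 - r * β = 0 := by linarith
      rw [h0]
      have : (0:ℝ) ≤ (q * (lam0 - l) - β * lam0) ^ 2 + l * (lam0 - l) * 0 := by
        simpa using sq_nonneg (q * (lam0 - l) - β * lam0)
      exact div_nonneg this hβ.le
  · rw [div_le_div_iff₀ (by positivity) (by positivity)]
    have h4 : r ^ 2 * β ^ 2 = (q - β) ^ 2 * (q + β) ^ 2 := by
      linear_combination (r * β + q ^ 2 - β ^ 2) * hrβ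
    have h5 : (q + β) ^ 2 ≤ 4 * q ^ 2 := by nlinarith
    have h6 : lam0 * ((q - β) ^ 2 * (q + β) ^ 2) ≤ lam0 * ((q - β) ^ 2 * (4 * q ^ 2)) := by
      have hqb : 0 ≤ q - β := by linarith
      nlinarith [mul_le_mul_of_nonneg_left h5 (sq_nonneg (q - β))]
    have e1 : lam0 * r ^ 2 * β * β = lam0 * ((q - β) ^ 2 * (q + β) ^ 2) := by
      linear_combination lam0 * h4
    have e2 : lam0 * (q - β) ^ 2 * (4 * (β + r)) * β = lam0 * ((q - β) ^ 2 * (4 * q ^ 2)) := by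
      linear_combination (-4) * lam0 * (q - β) ^ 2 * hq2
    have h7 : lam0 * r ^ 2 * β * β ≤ lam0 * (q - β) ^ 2 * (4 * (β + r)) * β := by
      linarith
    exact le_of_mul_le_mul_right h7 hβ
end
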